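/- Let d ∈ ℕ and let x_n^{(i)}, x^{(i)} ∈ D([0,∞),ℝ) for 1 ≤ i ≤ d. Assume x_n^{(i)} → x^{(i)} in the J₁-topology on D([0,∞),ℝ) for each i, and that the limits have no common jump times: Δx^{(i)}(t)·Δx^{(j)}(t) = 0 for all t ≥ 0 and i ≠ j, where Δf(t) := f(t) − f(t−). Then the vector-valued functions (x_n^{(1)},…,x_n^{(d)}) converge to (x^{(1)},…,x^{(d)}) in the J₁-topology on D([0,∞),ℝ^d). -/

import Mathlib

open Filter Set
open scoped NNReal Topology

/-- A function `[0,∞) → E` is càdlàg: right-continuous with left limits. -/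
def Cadlag {E : Type*} [TopologicalSpace E] (f : ℝ≥0 → E) : Prop :=
  ∀ t : ℝ≥0, ContinuousWithinAt f (Set.Ici t) t ∧
    ∃ l : E, Tendsto f (nhdsWithin t (Set.Iio t)) (𝓝 l)

/-- Convergence in Skorokhod's J₁-topology on `D([0,∞), E)`. -/
def J1Tendsto {E : Type*} [NormedAddCommGroup E] (x : ℕ → ℝ≥0 → E) (y : ℝ≥0 → E) : Prop :=
  ∀ T : ℝ≥0, 0 < T → ∃ lam : ℕ → ℝ≥0 → ℝ≥0,
    (∀ n, Continuous (lam n) ∧ StrictMono (lam n) ∧ lam n 0 = 0 ∧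
      Tendsto (lam n) atTop atTop) ∧
    (∀ ε : ℝ, 0 < ε → ∀ᶠ n in atTop, ∀ t ∈ Set.Icc (0 : ℝ≥0) T,
      ‖x n (lam n t) - y t‖ < ε ∧ |((lam n t : ℝ)) - (t : ℝ)| < ε)

/-- The jump `Δf(t) := f(t) − f(t−)` of a path at time `t`. -/
noncomputable def jumpAt (f : ℝ≥0 → ℝ) (t : ℝ≥0) : ℝ :=
  f t - Function.leftLim f t


/-- monotonicity along a finite chain -/
lemma chainMono {α : Type*} [Preorder α] {τ : ℕ → α} {k : ℕ}
    (h : ∀ m, m < k → τ m < τ (m+1)) :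
    ∀ i j, i ≤ j → j ≤ k → τ i ≤ τ j := by
  intro i j hij hjk
  induction j with
  | zero => simp_all
  | succ j ih =>
    rcases Nat.lt_succ_iff_lt_or_eq.1 (Nat.lt_succ_of_le hij) with h' | h'
    · exact le_trans (ih (Nat.lt_succ_iff.1 h') (le_trans (Nat.le_succ j) hjk))
        (h j (Nat.lt_of_succ_le hjk)).le
    · exact le_of_eq (by rw [h'])

lemma exists_cell {α : Type*} [LinearOrder α] {τ : ℕ → α} {k : ℕ} {t : α}
    (h0 : τ 0 ≤ t) (hk : t < τ k) :
    ∃ m, m < k ∧ τ m ≤ t ∧ t < τ (m+1) := by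
  induction k with
  | zero => exact absurd (h0.trans_lt hk) (lt_irrefl _)
  | succ k ih =>
    rcases lt_or_ge t (τ k) with h | h
    · obtain ⟨m, hm, h1, h2⟩ := ih h
      exact ⟨m, hm.trans (Nat.lt_succ_self k), h1, h2⟩
    · exact ⟨k, Nat.lt_succ_self k, h, hk⟩

lemma affine_dev {a a' b b' t D : ℝ} (h : a < a') (h1 : a ≤ t) (h2 : t ≤ a')
    (hb : |b - a| ≤ D) (hb' : |b' - a'| ≤ D) :
    |b + (b' - b) / (a' - a) * (t - a) - t| ≤ D := by
  have hne : a' - a ≠ 0 := by linarith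
  set θ : ℝ := (t - a) / (a' - a) with hθ
  have hθ0 : 0 ≤ θ := div_nonneg (by linarith) (by linarith)
  have hθ1 : θ ≤ 1 := (div_le_one (by linarith)).2 (by linarith)
  have key : b + (b' - b) / (a' - a) * (t - a) - t = (1 - θ) * (b - a) + θ * (b' - a') := by
    rw [hθ]
    field_simp
    ring
  rw [key]
  calc |(1 - θ) * (b - a) + θ * (b' - a')| ≤ (1-θ) * |b - a| + θ * |b' - a'| := by
        refine (abs_add_le _ _).trans ?_
        rw [abs_mul, abs_mul, abs_of_nonneg (by linarith), abs_of_nonneg hθ0]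
    _ ≤ (1-θ) * D + θ * D := by
        have hD : 0 ≤ D := le_trans (abs_nonneg _) hb
        have : (0:ℝ) ≤ 1 - θ := by linarith
        gcongr
    _ = D := by ring

/-- piecewise linear interpolation through `(a m, b m)`, `m ≤ k`, slope 1 outside. -/
noncomputable def plin (k : ℕ) (a b : ℕ → ℝ) (t : ℝ) : ℝ :=
  b 0 + (min t (a 0) - a 0)
    + ∑ m ∈ Finset.range k,
        ((b (m+1) - b m) / (a (m+1) - a m)) * (max (min t (a (m+1))) (a m) - a m)
    + (max t (a k) - a k)

section plin

variable {k : ℕ} {a b : ℕ → ℝ} (ha : ∀ m, m < k → a m < a (m+1))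

include ha

lemma plin_segment {m : ℕ} (hm : m < k) {t : ℝ} (ht1 : a m ≤ t) (ht2 : t ≤ a (m+1)) :
    plin k a b t = b m + ((b (m+1) - b m) / (a (m+1) - a m)) * (t - a m) := by
  have hmono := chainMono ha
  unfold plin
  have h1 : min t (a 0) = a 0 :=
    min_eq_right ((hmono 0 m (Nat.zero_le _) hm.le).trans ht1)
  have h2 : max t (a k) = a k :=
    max_eq_right (ht2.trans (hmono (m+1) k hm (le_refl _)))
  rw [h1, h2, sub_self, sub_self, add_zero, add_zero]
  have hsplit : Finset.range k = Finset.range (m+1) ∪ Finset.Ico (m+1) k :=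
    (by rw [Finset.range_eq_Ico, Finset.range_eq_Ico]; exact (Finset.Ico_union_Ico_eq_Ico (Nat.zero_le _) hm).symm)
  rw [hsplit, Finset.sum_union (by
    simp [Finset.disjoint_left, Finset.mem_range, Finset.mem_Ico]
    omega)]
  have hright : ∀ j ∈ Finset.Ico (m+1) k,
      ((b (j+1) - b j) / (a (j+1) - a j)) * (max (min t (a (j+1))) (a j) - a j) = 0 := by
    intro j hj
    rw [Finset.mem_Ico] at hj
    have hja : t ≤ a j := ht2.trans (hmono (m+1) j hj.1 hj.2.le)
    have : min t (a (j+1)) = t := min_eq_left (hja.trans (ha j hj.2).le)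
    rw [this, max_eq_right hja, sub_self, mul_zero]
  rw [Finset.sum_eq_zero hright, add_zero, Finset.sum_range_succ]
  have hmid : max (min t (a (m+1))) (a m) = t := by
    rw [min_eq_left ht2, max_eq_left ht1]
  rw [hmid]
  have hleft : ∀ j ∈ Finset.range m,
      ((b (j+1) - b j) / (a (j+1) - a j)) * (max (min t (a (j+1))) (a j) - a j)
        = b (j+1) - b j := by
    intro j hj
    rw [Finset.mem_range] at hj
    have hj1 : a (j+1) ≤ t := (hmono (j+1) m hj hm.le).trans ht1
    rw [min_eq_right hj1, max_eq_left (ha j (hj.trans hm)).le,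
      div_mul_cancel₀ _ (by have := ha j (hj.trans hm); linarith : a (j+1) - a j ≠ 0)]
  rw [Finset.sum_congr rfl hleft, Finset.sum_range_sub (fun j => b j)]
  ring

lemma plin_left {t : ℝ} (ht : t ≤ a 0) : plin k a b t = b 0 + (t - a 0) := by
  have hmono := chainMono ha
  unfold plin
  have h1 : min t (a 0) = t := min_eq_left ht
  have h2 : max t (a k) = a k := max_eq_right (ht.trans (hmono 0 k (Nat.zero_le _) le_rfl))
  rw [h1, h2, sub_self, add_zero]
  have : ∀ j ∈ Finset.range k,
      ((b (j+1) - b j) / (a (j+1) - a j)) * (max (min t (a (j+1))) (a j) - a j) = 0 := by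
    intro j hj
    rw [Finset.mem_range] at hj
    have hja : t ≤ a j := ht.trans (hmono 0 j (Nat.zero_le _) hj.le)
    rw [min_eq_left (hja.trans (ha j hj).le), max_eq_right hja, sub_self, mul_zero]
  rw [Finset.sum_eq_zero this, add_zero]

lemma plin_right {t : ℝ} (ht : a k ≤ t) : plin k a b t = b k + (t - a k) := by
  have hmono := chainMono ha
  unfold plin
  have h1 : min t (a 0) = a 0 := min_eq_right ((hmono 0 k (Nat.zero_le _) le_rfl).trans ht)
  have h2 : max t (a k) = t := max_eq_left ht
  rw [h1, h2, sub_self, add_zero]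
  have : ∀ j ∈ Finset.range k,
      ((b (j+1) - b j) / (a (j+1) - a j)) * (max (min t (a (j+1))) (a j) - a j)
        = b (j+1) - b j := by
    intro j hj
    rw [Finset.mem_range] at hj
    have hj1 : a (j+1) ≤ t := (hmono (j+1) k hj le_rfl).trans ht
    rw [min_eq_right hj1, max_eq_left (ha j hj).le,
      div_mul_cancel₀ _ (by have := ha j hj; linarith : a (j+1) - a j ≠ 0)]
  rw [Finset.sum_congr rfl this, Finset.sum_range_sub (fun j => b j)]
  ring

lemma plin_node {m : ℕ} (hm : m ≤ k) : plin k a b (a m) = b m := by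
  rcases lt_or_eq_of_le hm with h | h
  · rw [plin_segment ha h le_rfl (ha m h).le, sub_self, mul_zero, add_zero]
  · subst h; rw [plin_right ha le_rfl, sub_self, add_zero]

lemma plin_mono (hb : ∀ m, m < k → b m ≤ b (m+1)) : Monotone (plin k a b) := by
  intro t t' htt
  unfold plin
  refine add_le_add (add_le_add (add_le_add le_rfl ?_) ?_) ?_
  · exact sub_le_sub_right (min_le_min htt le_rfl) _
  · refine Finset.sum_le_sum fun j hj => ?_
    rw [Finset.mem_range] at hj
    have h1 : 0 ≤ (b (j+1) - b j) / (a (j+1) - a j) :=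
      div_nonneg (by have := hb j hj; linarith) (by have := ha j hj; linarith)
    have h2 : max (min t (a (j+1))) (a j) ≤ max (min t' (a (j+1))) (a j) :=
      max_le_max (min_le_min htt le_rfl) le_rfl
    exact mul_le_mul_of_nonneg_left (sub_le_sub_right h2 (a j)) h1
  · exact sub_le_sub_right (max_le_max htt le_rfl) _

lemma plin_strictMono (hb : ∀ m, m < k → b m < b (m+1)) : StrictMono (plin k a b) := by
  have hmonot := plin_mono ha (fun m hm => (hb m hm).le)
  intro t t' htt
  rcases lt_or_ge t (a 0) with h0 | h0
  · rcases le_or_gt t' (a 0) with h1 | h1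
    · rw [plin_left ha h0.le, plin_left ha h1]; linarith
    · calc plin k a b t = b 0 + (t - a 0) := plin_left ha h0.le
        _ < b 0 := by linarith
        _ = plin k a b (a 0) := (plin_node ha (Nat.zero_le _)).symm
        _ ≤ plin k a b t' := hmonot h1.le
  · rcases le_or_gt (a k) t with h1 | h1
    · rw [plin_right ha h1, plin_right ha (h1.trans htt.le)]; linarith
    · obtain ⟨m, hm, hc1, hc2⟩ := exists_cell (τ := a) h0 h1
      have hs : 0 < (b (m+1) - b m) / (a (m+1) - a m) :=
        div_pos (by have := hb m hm; linarith) (by have := ha m hm; linarith)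
      set t'' := min t' (a (m+1)) with ht''
      have htt'' : t < t'' := lt_min htt hc2
      have ht''2 : t'' ≤ a (m+1) := min_le_right _ _
      calc plin k a b t
          = b m + ((b (m+1) - b m) / (a (m+1) - a m)) * (t - a m) :=
            plin_segment ha hm hc1 hc2.le
        _ < b m + ((b (m+1) - b m) / (a (m+1) - a m)) * (t'' - a m) := by
            have := mul_lt_mul_of_pos_left (sub_lt_sub_right htt'' (a m)) hs
            linarith
        _ = plin k a b t'' := (plin_segment ha hm (hc1.trans htt''.le) ht''2).symm
        _ ≤ plin k a b t' := hmonot (min_le_left _ _)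

lemma plin_dev {D : ℝ} (hD : ∀ m, m ≤ k → |b m - a m| ≤ D) {t : ℝ}
    (h0 : a 0 ≤ t) (h1 : t ≤ a k) : |plin k a b t - t| ≤ D := by
  rcases lt_or_eq_of_le h1 with h | h
  · obtain ⟨m, hm, hc1, hc2⟩ := exists_cell (τ := a) h0 h
    rw [plin_segment ha hm hc1 hc2.le]
    exact affine_dev (ha m hm) hc1 hc2.le (hD m hm.le) (hD (m+1) hm)
  · subst h
    rw [plin_right ha le_rfl, sub_self, add_zero]
    exact hD k le_rfl

end plin

lemma plin_continuous (k : ℕ) (a b : ℕ → ℝ) : Continuous (plin k a b) := by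
  unfold plin
  refine ((continuous_const.add ((continuous_id.min continuous_const).sub
      continuous_const)).add (continuous_finset_sum _ fun j _ =>
      continuous_const.mul (((continuous_id.min continuous_const).max
      continuous_const).sub continuous_const))).add
      ((continuous_id.max continuous_const).sub continuous_const)


/-- Any càdlàg function admits, on any compact interval, a finite grid on whose
half-open cells the oscillation is at most `ε`. -/
lemma exists_grid {E : Type*} [NormedAddCommGroup E] {f : ℝ≥0 → E} (hf : Cadlag f)
    (T : ℝ≥0) {ε : ℝ} (hε : 0 < ε) :
    ∃ (k : ℕ) (τ : ℕ → ℝ≥0), τ 0 = 0 ∧ τ k = T ∧ (∀ m, m < k → τ m < τ (m+1)) ∧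
      ∀ m, m < k → ∀ u ∈ Ico (τ m) (τ (m+1)), ∀ v ∈ Ico (τ m) (τ (m+1)),
        ‖f u - f v‖ ≤ ε := by
  set P : ℝ≥0 → Prop := fun s => ∃ (k : ℕ) (τ : ℕ → ℝ≥0),
    τ 0 = 0 ∧ τ k = s ∧ (∀ m, m < k → τ m < τ (m+1)) ∧
      ∀ m, m < k → ∀ u ∈ Ico (τ m) (τ (m+1)), ∀ v ∈ Ico (τ m) (τ (m+1)),
        ‖f u - f v‖ ≤ ε with hP
  have hP0 : P 0 := ⟨0, fun _ => 0, rfl, rfl, by omega, by omega⟩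
  have hext : ∀ s s' : ℝ≥0, s < s' → P s →
      (∀ u ∈ Ico s s', ∀ v ∈ Ico s s', ‖f u - f v‖ ≤ ε) → P s' := by
    rintro s s' hss ⟨k, τ, h0, hk, hchain, hosc⟩ hnew
    refine ⟨k+1, fun j => if j ≤ k then τ j else s', by simp [h0], by simp, ?_, ?_⟩
    · intro m hm
      rcases Nat.lt_succ_iff_lt_or_eq.1 hm with h | h
      · simp only [h.le, if_pos, Nat.succ_le_of_lt h, if_pos]
        exact hchain m h
      · subst h
        simp only [le_rfl, if_pos, Nat.not_succ_le_self, if_neg, hk]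
        exact hss
    · intro m hm
      rcases Nat.lt_succ_iff_lt_or_eq.1 hm with h | h
      · simpa only [h.le, if_pos, Nat.succ_le_of_lt h] using hosc m h
      · subst h
        simpa only [le_rfl, if_pos, Nat.not_succ_le_self, if_neg, if_false, hk] using hnew
  set A : Set ℝ≥0 := {s | s ≤ T ∧ P s} with hA
  have hA0 : (0 : ℝ≥0) ∈ A := ⟨zero_le, hP0⟩
  have hAne : A.Nonempty := ⟨0, hA0⟩
  have hAbdd : BddAbove A := ⟨T, fun s hs => hs.1⟩
  set S : ℝ≥0 := sSup A with hS
  have hSle : S ≤ T := csSup_le hAne fun s hs => hs.1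
  have hSmem : P S := by
    rcases eq_or_lt_of_le (zero_le : (0:ℝ≥0) ≤ S) with h | hpos
    · rw [← h]; exact hP0
    · obtain ⟨l, hl⟩ := (hf S).2
      have hball : {u | ‖f u - l‖ ≤ ε/2} ∈ 𝓝[<] S := by
        have : Metric.closedBall l (ε/2) ∈ 𝓝 l :=
          Metric.closedBall_mem_nhds l (by linarith)
        filter_upwards [hl this] with u hu
        simpa [Metric.mem_closedBall, dist_eq_norm] using hu
      obtain ⟨a0, ha0, hsub⟩ := (mem_nhdsLT_iff_exists_Ioo_subset' hpos).1 hball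
      have ha0S : a0 < S := ha0
      obtain ⟨s, hsA, hs0⟩ := exists_lt_of_lt_csSup hAne ha0S
      have hsS : s ≤ S := le_csSup hAbdd hsA
      rcases eq_or_lt_of_le hsS with h | h
      · rw [← h]; exact hsA.2
      · refine hext s S h hsA.2 ?_
        intro u hu v hv
        have hu' : ‖f u - l‖ ≤ ε/2 := hsub ⟨hs0.trans_le hu.1, hu.2⟩
        have hv' : ‖f v - l‖ ≤ ε/2 := hsub ⟨hs0.trans_le hv.1, hv.2⟩
        calc ‖f u - f v‖ = ‖(f u - l) - (f v - l)‖ := by rw [sub_sub_sub_cancel_right]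
          _ ≤ ‖f u - l‖ + ‖f v - l‖ := norm_sub_le _ _
          _ ≤ ε := by linarith
  have hST : S = T := by
    by_contra hne
    have hlt : S < T := lt_of_le_of_ne hSle hne
    have hrc : Tendsto f (𝓝[≥] S) (𝓝 (f S)) := (hf S).1
    have hball : {u | ‖f u - f S‖ ≤ ε/2} ∈ 𝓝[≥] S := by
      have : Metric.closedBall (f S) (ε/2) ∈ 𝓝 (f S) :=
        Metric.closedBall_mem_nhds _ (by linarith)
      filter_upwards [hrc this] with u hu
      simpa [Metric.mem_closedBall, dist_eq_norm] using hu
    obtain ⟨u, hu, hsub⟩ := (mem_nhdsGE_iff_exists_Ico_subset' hlt).1 hball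
    have huS : S < u := hu
    set w : ℝ≥0 := min u T with hw
    have hSw : S < w := lt_min huS hlt
    have hwT : w ≤ T := min_le_right _ _
    have hsub' : Ico S w ⊆ {u | ‖f u - f S‖ ≤ ε / 2} :=
      fun p hp => hsub ⟨hp.1, hp.2.trans_le (min_le_left _ _)⟩
    have huA : w ∈ A := by
      refine ⟨hwT, hext S w hSw hSmem ?_⟩
      intro p hp q hq
      have hp' := hsub' hp
      have hq' := hsub' hq
      simp only [mem_setOf_eq] at hp' hq'
      calc ‖f p - f q‖ = ‖(f p - f S) - (f q - f S)‖ := by rw [sub_sub_sub_cancel_right]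
        _ ≤ ‖f p - f S‖ + ‖f q - f S‖ := norm_sub_le _ _
        _ ≤ ε := by linarith
    exact absurd (le_csSup hAbdd huA) (not_le.2 hSw)
  obtain ⟨k, τ, h0, hk, hchain, hosc⟩ := hSmem
  exact ⟨k, τ, h0, by rw [hk, hST], hchain, hosc⟩

lemma surj_of {g : ℝ≥0 → ℝ≥0} (hc : Continuous g) (h0 : g 0 = 0)
    (hT : Tendsto g atTop atTop) (v : ℝ≥0) : ∃ s, g s = v := by
  obtain ⟨B, hB⟩ := (hT.eventually (eventually_ge_atTop v)).exists
  have hv : v ∈ Icc (g 0) (g B) := ⟨by rw [h0]; exact zero_le, hB⟩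
  obtain ⟨s, _, hs⟩ := intermediate_value_Icc (zero_le : (0:ℝ≥0) ≤ B) hc.continuousOn hv
  exact ⟨s, hs⟩


theorem key_lemma (d : ℕ)
    (x : ℕ → Fin d → ℝ≥0 → ℝ) (y : Fin d → ℝ≥0 → ℝ)
    (hycad : ∀ i, Cadlag (y i))
    (hnojump : ∀ (t : ℝ≥0) (i j : Fin d), i ≠ j → jumpAt (y i) t * jumpAt (y j) t = 0)
    (T : ℝ≥0) (L : Fin d → ℕ → ℝ≥0 → ℝ≥0)
    (hLs : ∀ i n, Continuous (L i n) ∧ StrictMono (L i n) ∧ L i n 0 = 0 ∧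
      Tendsto (L i n) atTop atTop)
    {ε : ℝ} (hε : 0 < ε) :
    ∃ δ : ℝ, 0 < δ ∧ ∀ n : ℕ,
      (∀ i, ∀ t ∈ Icc (0:ℝ≥0) (T+1), |x n i (L i n t) - y i t| < δ ∧
        |((L i n t : ℝ)) - (t : ℝ)| < δ) →
      ∃ Λ : ℝ≥0 → ℝ≥0, Continuous Λ ∧ StrictMono Λ ∧ Λ 0 = 0 ∧
        Tendsto Λ atTop atTop ∧
        ∀ t ∈ Icc (0:ℝ≥0) T, (∀ i, |x n i (Λ t) - y i t| < ε) ∧ |((Λ t : ℝ)) - (t : ℝ)| < ε := by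
  classical
  set ε₀ : ℝ := ε/8 with hε₀
  have hε₀pos : 0 < ε₀ := by positivity
  -- the vector-valued path
  have hYcad : Cadlag (fun t i => y i t : ℝ≥0 → Fin d → ℝ) := by
    intro t
    constructor
    · exact continuousWithinAt_pi.2 fun i => (hycad i t).1
    · choose l hl using fun i => (hycad i t).2
      exact ⟨l, tendsto_pi_nhds.2 hl⟩
  obtain ⟨k, τ, hτ0, hτk, hchain, hosc⟩ := exists_grid hYcad (T+1) hε₀pos
  have hoscC : ∀ m, m < k → ∀ u ∈ Ico (τ m) (τ (m+1)), ∀ v ∈ Ico (τ m) (τ (m+1)),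
      ∀ i, |y i u - y i v| ≤ ε₀ := by
    intro m hm u hu v hv i
    have h1 := hosc m hm u hu v hv
    have h2 := norm_le_pi_norm ((fun j => y j u) - fun j => y j v) i
    simp only [Pi.sub_apply, Real.norm_eq_abs] at h2
    exact h2.trans h1
  have hτmono : ∀ i j, i ≤ j → j ≤ k → τ i ≤ τ j := chainMono hchain
  have hτT1 : ∀ m, m ≤ k → τ m ≤ T + 1 := fun m hm => hτk ▸ hτmono m k hm le_rfl
  have hk1 : 0 < k := by
    rcases Nat.eq_zero_or_pos k with h | h
    · exfalso
      rw [h, hτ0] at hτk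
      exact absurd hτk.symm (by simp)
    · exact h
  have hkne : (Finset.range k).Nonempty := Finset.nonempty_range_iff.2 (by omega)
  set gap : ℝ := (Finset.range k).inf' hkne (fun m => ((τ (m+1) : ℝ)) - ((τ m : ℝ))) with hgap
  have hgappos : 0 < gap := by
    rw [hgap, Finset.lt_inf'_iff]
    intro m hmm
    rw [Finset.mem_range] at hmm
    have := hchain m hmm
    have : ((τ m : ℝ)) < ((τ (m+1) : ℝ)) := by exact_mod_cast this
    linarith
  have hgap_le : ∀ m, m < k → gap ≤ ((τ (m+1) : ℝ)) - ((τ m : ℝ)) := fun m hm =>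
    Finset.inf'_le _ (Finset.mem_range.2 hm)
  set δ : ℝ := min (ε/8) (min (gap/8) (1/2)) with hδ
  have hδpos : 0 < δ := lt_min (by linarith) (lt_min (by linarith) (by norm_num))
  have hδε : δ ≤ ε/8 := min_le_left _ _
  have hδgap : δ ≤ gap/8 := (min_le_right _ _).trans (min_le_left _ _)
  have hδhalf : δ ≤ 1/2 := (min_le_right _ _).trans (min_le_right _ _)
  refine ⟨δ, hδpos, ?_⟩
  intro n hn
  -- nodes in ℝ
  set a : ℕ → ℝ := fun m => ((τ m : ℝ)) with hadef
  have ha : ∀ m, m < k → a m < a (m+1) := fun m hm => by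
    exact_mod_cast hchain m hm
  -- designated coordinates and node images
  set J : ℕ → Prop := fun m => ∃ i, jumpAt (y i) (τ m) ≠ 0 with hJdef
  set b : ℕ → ℝ := fun m => if h : J m then ((L h.choose n (τ m) : ℝ)) else ((τ m : ℝ))
    with hbdef
  have hjump_unique : ∀ m (h : J m) (i : Fin d), jumpAt (y i) (τ m) ≠ 0 → h.choose = i := by
    intro m h i hi
    by_contra hne
    exact hi (by
      have := hnojump (τ m) h.choose i hne
      rcases mul_eq_zero.1 this with h' | h'
      · exact absurd h' h.choose_spec
      · exact h')
  have hbdev : ∀ m, m ≤ k → |b m - a m| < δ := by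
    intro m hm
    by_cases h : J m
    · rw [hbdef]
      simp only [dif_pos h]
      exact (hn h.choose (τ m) ⟨zero_le, hτT1 m hm⟩).2
    · rw [hbdef]
      simp only [dif_neg h, hadef, sub_self, abs_zero]
      exact hδpos
  have hb0 : b 0 = 0 := by
    rw [hbdef]
    by_cases h : J 0
    · simp only [dif_pos h, hτ0]
      rw [(hLs _ n).2.2.1, NNReal.coe_zero]
    · simp only [dif_neg h, hτ0, NNReal.coe_zero]
  have hbmono : ∀ m, m < k → b m < b (m+1) := by
    intro m hm
    have d1 := abs_lt.1 (hbdev m hm.le)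
    have d2 := abs_lt.1 (hbdev (m+1) hm)
    have d3 := hgap_le m hm
    have : gap / 8 ≥ δ := hδgap
    simp only [hadef] at d1 d2 d3
    linarith [d1.1, d1.2, d2.1, d2.2]
  -- the common time change
  set f : ℝ → ℝ := plin k a b with hfdef
  set Λ : ℝ≥0 → ℝ≥0 := fun t => Real.toNNReal (f ((t : ℝ))) with hΛdef
  have ha0 : a 0 = 0 := by simp [hadef, hτ0]
  have hak : a k = ((T : ℝ)) + 1 := by simp [hadef, hτk]
  have hf0 : f 0 = 0 := by
    have h1 : f (a 0) = b 0 := plin_node ha (Nat.zero_le k)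
    rw [ha0] at h1
    rw [h1, hb0]
  have hfmono : Monotone f := plin_mono ha (fun m hm => (hbmono m hm).le)
  have hfstrict : StrictMono f := plin_strictMono ha hbmono
  have hfnn : ∀ t : ℝ≥0, 0 ≤ f ((t : ℝ)) := by
    intro t
    have := hfmono (show (0:ℝ) ≤ ((t:ℝ)) from t.2)
    rw [hf0] at this
    exact this
  have hΛcoe : ∀ t : ℝ≥0, ((Λ t : ℝ)) = f ((t : ℝ)) := fun t => Real.coe_toNNReal _ (hfnn t)
  have hΛcont : Continuous Λ :=
    continuous_real_toNNReal.comp ((plin_continuous k a b).comp NNReal.continuous_coe)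
  have hΛstrict : StrictMono Λ := by
    intro s t hst
    have h1 : f ((s:ℝ)) < f ((t:ℝ)) := hfstrict (NNReal.coe_lt_coe.2 hst)
    exact (Real.toNNReal_lt_toNNReal_iff (lt_of_le_of_lt (hfnn s) h1)).2 h1
  have hΛ0 : Λ 0 = 0 := by
    rw [hΛdef]
    simp only [NNReal.coe_zero, hf0, Real.toNNReal_zero]
  have hΛtop : Tendsto Λ atTop atTop := by
    have h1 : Tendsto f atTop atTop := by
      have h2 : Tendsto (fun t : ℝ => t + (b k - a k)) atTop atTop :=
        tendsto_atTop_add_const_right _ _ tendsto_id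
      refine h2.congr' ?_
      filter_upwards [eventually_ge_atTop (a k)] with t ht
      rw [hfdef, plin_right ha ht]
      ring
    exact tendsto_real_toNNReal_atTop.comp (h1.comp (NNReal.tendsto_coe_atTop.2 tendsto_id))
  have hdev : ∀ t : ℝ≥0, t ≤ T → |f ((t:ℝ)) - ((t:ℝ))| ≤ δ := by
    intro t ht
    refine plin_dev ha (fun m hm => (hbdev m hm).le) ?_ ?_
    · rw [ha0]; exact t.2
    · rw [hak]
      have : ((t:ℝ)) ≤ ((T:ℝ)) := NNReal.coe_le_coe.2 ht
      linarith
  refine ⟨Λ, hΛcont, hΛstrict, hΛ0, hΛtop, ?_⟩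
  intro t ht
  have hft : |f ((t:ℝ)) - ((t:ℝ))| ≤ δ := hdev t ht.2
  constructor
  · -- per-coordinate bound
    intro i
    -- the cell containing t
    obtain ⟨m, hm, hmt1, hmt2⟩ := exists_cell (τ := τ)
      (show τ 0 ≤ t by rw [hτ0]; exact zero_le)
      (show t < τ k by rw [hτk]; exact lt_of_le_of_lt ht.2 (lt_add_of_pos_right T one_pos))
    obtain ⟨s, hs⟩ := surj_of (hLs i n).1 (hLs i n).2.2.1 (hLs i n).2.2.2 (Λ t)
    have hLT1 : |((L i n (T+1) : ℝ)) - (((T+1 : ℝ≥0)) : ℝ)| < δ :=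
      (hn i (T+1) ⟨zero_le, le_rfl⟩).2
    have hcoeT1 : (((T+1 : ℝ≥0)) : ℝ) = ((T:ℝ)) + 1 := by push_cast; ring
    rw [hcoeT1] at hLT1
    have h1 : ((L i n s : ℝ)) = f ((t:ℝ)) := by rw [hs, hΛcoe]
    have htT : ((t:ℝ)) ≤ ((T:ℝ)) := NNReal.coe_le_coe.2 ht.2
    have hsT1 : s < T + 1 := by
      have h2 : ((L i n s : ℝ)) < ((L i n (T+1) : ℝ)) := by
        rcases abs_lt.1 hLT1 with ⟨u1, u2⟩
        rcases abs_le.1 hft with ⟨v1, v2⟩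
        rw [h1]; linarith
      exact (hLs i n).2.1.lt_iff_lt.1 (NNReal.coe_lt_coe.1 h2)
    have hsmem : s ∈ Icc (0:ℝ≥0) (T+1) := ⟨zero_le, hsT1.le⟩
    have hxb : |x n i (Λ t) - y i s| < δ := by rw [← hs]; exact (hn i s hsmem).1
    have hsd : |((L i n s : ℝ)) - ((s:ℝ))| < δ := (hn i s hsmem).2
    have hsdev : |((s:ℝ)) - ((t:ℝ))| ≤ 2*δ := by
      have hft' : |((L i n s : ℝ)) - ((t:ℝ))| ≤ δ := by rw [h1]; exact hft
      rcases abs_lt.1 hsd with ⟨u1, u2⟩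
      rcases abs_le.1 hft' with ⟨v1, v2⟩
      rw [abs_le]; constructor <;> linarith
    have hdesig : ∀ m', m' ≤ k → jumpAt (y i) (τ m') ≠ 0 → Λ (τ m') = L i n (τ m') := by
      intro m' hm' hji
      have hJ : J m' := ⟨i, hji⟩
      have hch : hJ.choose = i := hjump_unique m' hJ i hji
      apply NNReal.coe_injective
      rw [hΛcoe]
      calc f (((τ m' : ℝ))) = b m' := plin_node ha hm'
        _ = ((L i n (τ m') : ℝ)) := by rw [hbdef]; simp only [dif_pos hJ, hch]
    have hleftlim : ∀ m', m' < k → ∀ i' : Fin d, jumpAt (y i') (τ (m'+1)) = 0 →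
        ∀ s' ∈ Ico (τ m') (τ (m'+1)), |y i' s' - y i' (τ (m'+1))| ≤ ε₀ := by
      intro m' hm' i' hji s' hs'
      have hq0 : (0:ℝ≥0) < τ (m'+1) := lt_of_le_of_lt (zero_le : (0:ℝ≥0) ≤ τ m') (hchain m' hm')
      haveI hnb : (𝓝[<] (τ (m'+1))).NeBot := nhdsWithin_Iio_self_neBot' ⟨0, hq0⟩
      obtain ⟨l, hl⟩ := (hycad i' (τ (m'+1))).2
      have hll : Function.leftLim (y i') (τ (m'+1)) = l := leftLim_eq_of_tendsto hl
      have hyq : y i' (τ (m'+1)) = l := by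
        have h2 := hji
        unfold jumpAt at h2
        rw [hll] at h2
        linarith [sub_eq_zero.1 h2]
      have hev : ∀ᶠ u in 𝓝[<] (τ (m'+1)), |y i' s' - y i' u| ≤ ε₀ := by
        filter_upwards [Ioo_mem_nhdsLT_of_mem
          (⟨hchain m' hm', le_rfl⟩ : τ (m'+1) ∈ Ioc (τ m') (τ (m'+1)))] with u hu
        exact hoscC m' hm' s' hs' u ⟨hu.1.le, hu.2⟩ i'
      have hlim : Tendsto (fun u => |y i' s' - y i' u|) (𝓝[<] (τ (m'+1)))
          (𝓝 |y i' s' - y i' (τ (m'+1))|) := by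
        rw [hyq]
        exact (tendsto_const_nhds.sub hl).abs
      exact le_of_tendsto hlim hev
    -- case analysis on where s lands
    have hyB : |y i s - y i t| ≤ 2*ε₀ := by
      by_cases hcase : s < τ m
      · -- s in the previous cell
        have hm0 : 0 < m := by
          rcases Nat.eq_zero_or_pos m with h | h
          · exfalso; rw [h, hτ0] at hcase; exact absurd hcase (not_lt.2 zero_le)
          · exact h
        obtain ⟨m', rfl⟩ : ∃ m', m = m' + 1 := ⟨m-1, (Nat.succ_pred_eq_of_pos hm0).symm⟩
        have hm'k : m' < k := lt_trans (Nat.lt_succ_self m') hm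
        have hjm : jumpAt (y i) (τ (m'+1)) = 0 := by
          by_contra hji
          have h2 : L i n (τ (m'+1)) ≤ L i n s := by
            calc L i n (τ (m'+1)) = Λ (τ (m'+1)) := (hdesig _ hm.le hji).symm
              _ ≤ Λ t := hΛstrict.monotone hmt1
              _ = L i n s := hs.symm
          exact absurd ((hLs i n).2.1.le_iff_le.1 h2) (not_le.2 hcase)
        have hs_lb : τ m' ≤ s := by
          have c1 : ((τ (m'+1) : ℝ)) ≤ ((t:ℝ)) := NNReal.coe_le_coe.2 hmt1
          have c2 := hgap_le m' hm'k
          rcases abs_le.1 hsdev with ⟨w1, w2⟩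
          have : ((τ m' : ℝ)) ≤ ((s:ℝ)) := by linarith
          exact_mod_cast this
        have hB1 : |y i s - y i (τ (m'+1))| ≤ ε₀ :=
          hleftlim m' hm'k i hjm s ⟨hs_lb, hcase⟩
        have hB2 : |y i (τ (m'+1)) - y i t| ≤ ε₀ :=
          hoscC (m'+1) hm (τ (m'+1)) ⟨le_rfl, hchain _ hm⟩ t ⟨hmt1, hmt2⟩ i
        calc |y i s - y i t| ≤ |y i s - y i (τ (m'+1))| + |y i (τ (m'+1)) - y i t| :=
              abs_sub_le _ _ _
          _ ≤ 2*ε₀ := by linarith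
      · by_cases hcase2 : τ (m+1) ≤ s
        · -- s in the next cell
          have hm1k : m + 1 < k := by
            rcases lt_or_eq_of_le (Nat.succ_le_of_lt hm) with h | h
            · exact h
            · exfalso
              have h' : m + 1 = k := h
              rw [h', hτk] at hcase2
              exact absurd hcase2 (not_le.2 hsT1)
          have hjm : jumpAt (y i) (τ (m+1)) = 0 := by
            by_contra hji
            have h2 : L i n s < L i n (τ (m+1)) := by
              calc L i n s = Λ t := hs
                _ < Λ (τ (m+1)) := hΛstrict hmt2
                _ = L i n (τ (m+1)) := hdesig _ hm1k.le hji
            exact absurd ((hLs i n).2.1.lt_iff_lt.1 h2) (not_lt.2 hcase2)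
          have hs_ub : s < τ (m+2) := by
            have c1 : ((t:ℝ)) < ((τ (m+1) : ℝ)) := NNReal.coe_lt_coe.2 hmt2
            have c2 := hgap_le (m+1) hm1k
            rcases abs_le.1 hsdev with ⟨w1, w2⟩
            have : ((s : ℝ)) < ((τ (m+2) : ℝ)) := by linarith
            exact_mod_cast this
          have hB1 : |y i t - y i (τ (m+1))| ≤ ε₀ := hleftlim m hm i hjm t ⟨hmt1, hmt2⟩
          have hB2 : |y i s - y i (τ (m+1))| ≤ ε₀ :=
            hoscC (m+1) hm1k s ⟨hcase2, hs_ub⟩ (τ (m+1)) ⟨le_rfl, hchain _ hm1k⟩ i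
          calc |y i s - y i t| ≤ |y i s - y i (τ (m+1))| + |y i (τ (m+1)) - y i t| :=
                abs_sub_le _ _ _
            _ ≤ 2*ε₀ := by
                rw [abs_sub_comm (y i (τ (m+1))) (y i t)]
                linarith
        · -- s in the same cell
          have := hoscC m hm s ⟨not_lt.1 hcase, not_le.1 hcase2⟩ t ⟨hmt1, hmt2⟩ i
          linarith
    calc |x n i (Λ t) - y i t| ≤ |x n i (Λ t) - y i s| + |y i s - y i t| := abs_sub_le _ _ _
      _ < ε := by rw [hε₀] at hyB; linarith
  · rw [hΛcoe]
    calc |f ((t:ℝ)) - ((t:ℝ))| ≤ δ := hft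
      _ < ε := by linarith


/-- If `x_n^{(i)} → x^{(i)}` in the J₁-topology on `D([0,∞),ℝ)`
for each `1 ≤ i ≤ d`, and the limits have no common jump times
(`Δx^{(i)}(t)·Δx^{(j)}(t) = 0` for `i ≠ j`), then the vector-valued paths
converge in the J₁-topology on `D([0,∞),ℝ^d)`. -/
theorem stmt5
    (d : ℕ)
    (x : ℕ → Fin d → ℝ≥0 → ℝ) (y : Fin d → ℝ≥0 → ℝ)
    (hxcad : ∀ n i, Cadlag (x n i)) (hycad : ∀ i, Cadlag (y i))
    (hconv : ∀ i, J1Tendsto (fun n => x n i) (y i))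
    (hnojump : ∀ (t : ℝ≥0) (i j : Fin d), i ≠ j → jumpAt (y i) t * jumpAt (y j) t = 0) :
    J1Tendsto (E := Fin d → ℝ) (fun n t i => x n i t) (fun t i => y i t) := by
  classical
  intro T hT
  choose L hL using fun i => hconv i (T+1) (by positivity)
  have hLs : ∀ i n, Continuous (L i n) ∧ StrictMono (L i n) ∧ L i n 0 = 0 ∧
      Tendsto (L i n) atTop atTop := fun i n => (hL i).1 n
  have hLc : ∀ (i : Fin d) (ε : ℝ), 0 < ε → ∀ᶠ n in atTop, ∀ t ∈ Icc (0:ℝ≥0) (T+1),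
      |x n i (L i n t) - y i t| < ε ∧ |((L i n t : ℝ)) - (t : ℝ)| < ε := by
    intro i ε hε
    filter_upwards [(hL i).2 ε hε] with n hn
    intro t htt
    simpa [Real.norm_eq_abs] using hn t htt
  have KEY := fun j : ℕ => key_lemma d x y hycad hnojump T L hLs
    (show (0:ℝ) < 1/((j:ℝ)+1) by positivity)
  choose δ hδpos hbuild using KEY
  have hQ : ∀ j : ℕ, ∀ᶠ n in atTop, ∀ i, ∀ t ∈ Icc (0:ℝ≥0) (T+1),
      |x n i (L i n t) - y i t| < δ j ∧ |((L i n t : ℝ)) - (t : ℝ)| < δ j := by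
    intro j
    rw [eventually_all]
    intro i
    exact hLc i (δ j) (hδpos j)
  choose M hM using fun j => eventually_atTop.1 (hQ j)
  set N : ℕ → ℕ := fun j => j + (Finset.range (j+1)).sup M with hN
  have hMN : ∀ j, M j ≤ N j := fun j =>
    (Finset.le_sup (Finset.self_mem_range_succ j)).trans (Nat.le_add_left _ _)
  have hjN : ∀ j, j ≤ N j := fun j => Nat.le_add_right _ _
  have hNmono : Monotone N := fun j j' h =>
    add_le_add h (Finset.sup_mono (Finset.range_subset_range.2 (by omega)))
  set lvl : ℕ → ℕ := fun n => Nat.findGreatest (fun j => N j ≤ n) n with hlvl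
  set lam : ℕ → ℝ≥0 → ℝ≥0 := fun n =>
    if h : ∀ i, ∀ t ∈ Icc (0:ℝ≥0) (T+1), |x n i (L i n t) - y i t| < δ (lvl n) ∧
        |((L i n t : ℝ)) - (t : ℝ)| < δ (lvl n) then
      (hbuild (lvl n) n h).choose
    else id with hlam
  refine ⟨lam, ?_, ?_⟩
  · intro n
    by_cases h : ∀ i, ∀ t ∈ Icc (0:ℝ≥0) (T+1), |x n i (L i n t) - y i t| < δ (lvl n) ∧
        |((L i n t : ℝ)) - (t : ℝ)| < δ (lvl n)
    · have heq : lam n = (hbuild (lvl n) n h).choose := by rw [hlam]; exact dif_pos h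
      rw [heq]
      obtain ⟨s1, s2, s3, s4, _⟩ := (hbuild (lvl n) n h).choose_spec
      exact ⟨s1, s2, s3, s4⟩
    · have heq : lam n = id := by rw [hlam]; exact dif_neg h
      rw [heq]
      exact ⟨continuous_id, strictMono_id, rfl, tendsto_id⟩
  · intro ε hε
    obtain ⟨j0, hj0⟩ := exists_nat_one_div_lt hε
    filter_upwards [eventually_ge_atTop (N j0)] with n hn
    have hP0 : N 0 ≤ n := le_trans (hNmono (Nat.zero_le j0)) hn
    have hlvlge : j0 ≤ lvl n := Nat.le_findGreatest (le_trans (hjN j0) hn) hn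
    have hNlvl : N (lvl n) ≤ n := Nat.findGreatest_spec (P := fun j => N j ≤ n) (Nat.zero_le n) hP0
    have hcond : ∀ i, ∀ t ∈ Icc (0:ℝ≥0) (T+1), |x n i (L i n t) - y i t| < δ (lvl n) ∧
        |((L i n t : ℝ)) - (t : ℝ)| < δ (lvl n) :=
      hM (lvl n) n ((hMN (lvl n)).trans hNlvl)
    have heq : lam n = (hbuild (lvl n) n hcond).choose := by rw [hlam]; exact dif_pos hcond
    have hspec := (hbuild (lvl n) n hcond).choose_spec
    intro t htt
    have hb := hspec.2.2.2.2 t htt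
    have hmono1 : 1/((lvl n : ℝ)+1) ≤ 1/((j0:ℝ)+1) := by
      apply one_div_le_one_div_of_le (by positivity)
      have : (j0 : ℝ) ≤ (lvl n : ℝ) := by exact_mod_cast hlvlge
      linarith
    rw [heq]
    constructor
    · rw [pi_norm_lt_iff hε]
      intro i
      have h1 := hb.1 i
      simp only [Pi.sub_apply, Real.norm_eq_abs]
      calc |x n i ((hbuild (lvl n) n hcond).choose t) - y i t| < 1/((lvl n : ℝ)+1) := h1
        _ ≤ 1/((j0:ℝ)+1) := hmono1
        _ < ε := hj0
    · calc |(((hbuild (lvl n) n hcond).choose t : ℝ)) - (t:ℝ)| < 1/((lvl n : ℝ)+1) := hb.2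
        _ ≤ 1/((j0:ℝ)+1) := hmono1
        _ < ε := hj0
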